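/- There exist universal constants C, c > 0 such that the following holds for all integers k ≤ m and d ≥ C·k·log m. There exist vectors v_1,…,v_m ∈ ℝ^d such that, defining v_S = Σ_{i∈S} v_i for each k-element subset S of {1,…,m}, the following two conditions hold: (Boundedness) for every k-element subset S, ‖v_S‖² ≤ 1; (Separation) for every pair of k-element subsets S, S', ‖v_S − v_{S'}‖² ≥ |S Δ S'|/(4k), where S Δ S' is the symmetric difference. -/

import Mathlib

open scoped ENNReal NNReal

noncomputable section

/-- Squared Euclidean norm on `ℝ^d`. -/
def sqNorm {d : ℕ} (v : Fin d → ℝ) : ℝ := ∑ i, (v i) ^ 2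

open Finset

namespace SepExperts
noncomputable section


/-- exp as a tsum -/
lemma exp_tsum (u : ℝ) : Real.exp u = ∑' n : ℕ, u ^ n / n.factorial := by
  rw [Real.exp_eq_exp_ℝ, NormedSpace.exp_eq_tsum_div]

lemma coshHasSum (u : ℝ) :
    HasSum (fun n : ℕ => u ^ (2 * n) / (2 * n).factorial)
      ((Real.exp u + Real.exp (-u)) / 2) := by
  have h1 : HasSum (fun j : ℕ => u ^ j / j.factorial) (Real.exp u) := by
    rw [exp_tsum]; exact (Real.summable_pow_div_factorial u).hasSum
  have h2 : HasSum (fun j : ℕ => (-u) ^ j / j.factorial) (Real.exp (-u)) := by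
    rw [exp_tsum]; exact (Real.summable_pow_div_factorial (-u)).hasSum
  have h3 : HasSum (fun j : ℕ => (u ^ j + (-u) ^ j) / (2 * j.factorial))
      ((Real.exp u + Real.exp (-u)) / 2) := by
    have h := (h1.add h2).div_const 2
    convert h using 2 with j
    · rfl
    have hj : (j.factorial : ℝ) ≠ 0 := by positivity
    field_simp
  have hinj : Function.Injective (fun n : ℕ => 2 * n) := by
    intro a b h; simpa using h
  have hvan : ∀ j, j ∉ Set.range (fun n : ℕ => 2 * n) →
      (u ^ j + (-u) ^ j) / (2 * (j.factorial : ℝ)) = 0 := by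
    intro j hj
    have hodd : Odd j := by
      rcases Nat.even_or_odd j with he | ho
      · obtain ⟨q, hq⟩ := he
        exact absurd (Set.mem_range.2 ⟨q, by omega⟩) hj
      · exact ho
    rw [hodd.neg_pow]
    simp
  have h4 := (Function.Injective.hasSum_iff hinj hvan).2 h3
  convert h4 using 2 with n
  have hev : Even (2 * n) := ⟨n, by ring⟩
  show u ^ (2 * n) / ((2 * n).factorial : ℝ)
      = (u ^ (2 * n) + (-u) ^ (2 * n)) / (2 * ((2 * n).factorial : ℝ))
  rw [hev.neg_pow]
  have : ((2 * n).factorial : ℝ) ≠ 0 := by positivity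
  field_simp
  ring

lemma cosh_term_le (u : ℝ) (n : ℕ) :
    u ^ (2 * n) / (2 * n).factorial ≤ (Real.exp u + Real.exp (-u)) / 2 := by
  refine le_of_le_of_eq (Summable.le_tsum ((coshHasSum u).summable) n (fun j _ => ?_))
    (coshHasSum u).tsum_eq
  have h : (0:ℝ) ≤ u ^ (2 * j) := by
    have h2 : u ^ (2 * j) = (u ^ j) ^ 2 := by rw [← pow_mul, mul_comm]
    rw [h2]; positivity
  positivity

lemma cosh_le_exp_half_sq (u : ℝ) :
    (Real.exp u + Real.exp (-u)) / 2 ≤ Real.exp (u ^ 2 / 2) := by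
  rw [← (coshHasSum u).tsum_eq, exp_tsum]
  refine Summable.tsum_le_tsum (fun n => ?_) (coshHasSum u).summable
    (Real.summable_pow_div_factorial _)
  have hfac : ((2:ℝ) ^ n * n.factorial) ≤ (2 * n).factorial := by
    exact_mod_cast Nat.two_pow_mul_factorial_le_factorial_two_mul n
  have hnum : (u ^ 2 / 2) ^ n = u ^ (2 * n) / 2 ^ n := by
    rw [div_pow, ← pow_mul, mul_comm]
  rw [hnum, div_div]
  apply div_le_div_of_nonneg_left _ _ hfac
  · have h2 : u ^ (2 * n) = (u ^ n) ^ 2 := by rw [← pow_mul, mul_comm]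
    rw [h2]; positivity
  · positivity

def rad (b : Bool) : ℝ := if b then 1 else -1

lemma rad_mul_self (b : Bool) : rad b * rad b = 1 := by cases b <;> simp [rad]

lemma rad_not (b : Bool) : rad (!b) = - rad b := by cases b <;> simp [rad]

variable {m : ℕ}

def zf (x : Fin m → ℝ) (r : Fin m → Bool) : ℝ := ∑ i, x i * rad (r i)

lemma zf_sub (x y : Fin m → ℝ) (r : Fin m → Bool) :
    zf (x - y) r = zf x r - zf y r := by
  simp [zf, sub_mul, Finset.sum_sub_distrib]

def flipE (i : Fin m) : (Fin m → Bool) ≃ (Fin m → Bool) where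
  toFun r := Function.update r i (! r i)
  invFun r := Function.update r i (! r i)
  left_inv r := by
    funext j
    rcases eq_or_ne j i with rfl | h
    · simp
    · simp [Function.update_of_ne h]
  right_inv r := by
    funext j
    rcases eq_or_ne j i with rfl | h
    · simp
    · simp [Function.update_of_ne h]

lemma sum_rad_mul (i j : Fin m) (h : i ≠ j) :
    ∑ r : Fin m → Bool, rad (r i) * rad (r j) = 0 := by
  have h1 : ∑ r : Fin m → Bool, rad ((flipE i) r i) * rad ((flipE i) r j)
      = ∑ r : Fin m → Bool, rad (r i) * rad (r j) :=
    Equiv.sum_comp (flipE i) (fun r => rad (r i) * rad (r j))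
  have h2 : ∀ r : Fin m → Bool,
      rad ((flipE i) r i) * rad ((flipE i) r j) = - (rad (r i) * rad (r j)) := by
    intro r
    have hi : (flipE i) r i = ! r i := Function.update_self _ _ _
    have hj : (flipE i) r j = r j := Function.update_of_ne (Ne.symm h) _ _
    rw [hi, hj, rad_not]
    ring
  rw [Finset.sum_congr rfl (fun r _ => h2 r), Finset.sum_neg_distrib] at h1
  linarith

lemma card_cube : (Finset.univ : Finset (Fin m → Bool)).card = 2 ^ m := by
  rw [Finset.card_univ, Fintype.card_fun]
  simp

lemma sum_zf_sq (x : Fin m → ℝ) :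
    ∑ r : Fin m → Bool, (zf x r) ^ 2 = 2 ^ m * ∑ i, x i ^ 2 := by
  have expand : ∀ r : Fin m → Bool, (zf x r) ^ 2
      = ∑ i, ∑ j, (x i * x j) * (rad (r i) * rad (r j)) := by
    intro r
    rw [pow_two, zf, Finset.sum_mul_sum]
    exact Finset.sum_congr rfl fun i _ => Finset.sum_congr rfl fun j _ => by ring
  calc ∑ r : Fin m → Bool, (zf x r) ^ 2
      = ∑ r : Fin m → Bool, ∑ i, ∑ j, (x i * x j) * (rad (r i) * rad (r j)) :=
        Finset.sum_congr rfl fun r _ => expand r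
    _ = ∑ i, ∑ j, ∑ r : Fin m → Bool, (x i * x j) * (rad (r i) * rad (r j)) := by
        rw [Finset.sum_comm]
        exact Finset.sum_congr rfl fun i _ => Finset.sum_comm
    _ = ∑ i, ∑ j, (x i * x j) * ∑ r : Fin m → Bool, rad (r i) * rad (r j) := by
        simp_rw [Finset.mul_sum]
    _ = ∑ i : Fin m, (x i * x i) * 2 ^ m := by
        refine Finset.sum_congr rfl fun i _ => ?_
        refine Finset.sum_eq_single_of_mem i (Finset.mem_univ i) (fun j _ hj => ?_) |>.trans ?_
        · rw [sum_rad_mul i j (Ne.symm hj), mul_zero]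
        · congr 1
          rw [Finset.sum_congr rfl (fun r _ => rad_mul_self (r i)), Finset.sum_const,
            card_cube, nsmul_eq_mul, mul_one]
          push_cast
          ring
    _ = 2 ^ m * ∑ i, x i ^ 2 := by
        rw [Finset.mul_sum]
        exact Finset.sum_congr rfl fun i _ => by ring

lemma sum_exp_mul (t : ℝ) (x : Fin m → ℝ) :
    ∑ r : Fin m → Bool, Real.exp (t * zf x r)
      = ∏ i, (Real.exp (t * x i) + Real.exp (-(t * x i))) := by
  have h1 : ∀ r : Fin m → Bool,
      Real.exp (t * zf x r) = ∏ i, Real.exp (t * (x i * rad (r i))) := by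
    intro r; rw [zf, Finset.mul_sum, Real.exp_sum]
  rw [Finset.sum_congr rfl fun r _ => h1 r,
    ← Fintype.prod_sum (fun i (b : Bool) => Real.exp (t * (x i * rad b)))]
  refine Finset.prod_congr rfl fun i _ => ?_
  rw [Fintype.sum_bool]
  simp [rad]

lemma sum_exp_le (t : ℝ) (x : Fin m → ℝ) :
    ∑ r : Fin m → Bool, Real.exp (t * zf x r)
      ≤ 2 ^ m * Real.exp (t ^ 2 * (∑ i, x i ^ 2) / 2) := by
  rw [sum_exp_mul]
  calc ∏ i, (Real.exp (t * x i) + Real.exp (-(t * x i)))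
      ≤ ∏ i : Fin m, 2 * Real.exp ((t * x i) ^ 2 / 2) := by
        refine Finset.prod_le_prod (fun i _ => by positivity) (fun i _ => ?_)
        have h := cosh_le_exp_half_sq (t * x i)
        linarith
    _ = 2 ^ m * Real.exp (∑ i, (t * x i) ^ 2 / 2) := by
        rw [Finset.prod_mul_distrib, Finset.prod_const, Real.exp_sum, Finset.card_univ,
          Fintype.card_fin]
    _ = 2 ^ m * Real.exp (t ^ 2 * (∑ i, x i ^ 2) / 2) := by
        congr 1
        rw [Finset.mul_sum (a := t^2), Finset.sum_div]
        exact congrArg Real.exp (Finset.sum_congr rfl fun i _ => by ring)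

lemma sum_cosh_le (t : ℝ) (x : Fin m → ℝ) :
    ∑ r : Fin m → Bool, (Real.exp (t * zf x r) + Real.exp (-(t * zf x r))) / 2
      ≤ 2 ^ m * Real.exp (t ^ 2 * (∑ i, x i ^ 2) / 2) := by
  have h1 := sum_exp_le t x
  have h2 := sum_exp_le (-t) x
  have he : ∀ r : Fin m → Bool, -(t * zf x r) = (-t) * zf x r := fun r => by ring
  have hsq : (-t) ^ 2 = t ^ 2 := by ring
  rw [hsq] at h2
  have : ∑ r : Fin m → Bool, (Real.exp (t * zf x r) + Real.exp (-(t * zf x r))) / 2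
      = (∑ r : Fin m → Bool, Real.exp (t * zf x r)
        + ∑ r : Fin m → Bool, Real.exp ((-t) * zf x r)) / 2 := by
    rw [← Finset.sum_add_distrib, Finset.sum_div]
    exact Finset.sum_congr rfl fun r _ => by rw [he r]
  rw [this]
  linarith


lemma sum_zf_pow_le_aux (x : Fin m → ℝ) (n : ℕ) (t : ℝ) (ht : 0 < t) :
    ∑ r : Fin m → Bool, (zf x r) ^ (2 * n)
      ≤ (2 * n).factorial / t ^ (2 * n)
        * (2 ^ m * Real.exp (t ^ 2 * (∑ i, x i ^ 2) / 2)) := by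
  have point : ∀ r : Fin m → Bool, (zf x r) ^ (2 * n)
      ≤ ((2 * n).factorial : ℝ) / t ^ (2 * n)
        * ((Real.exp (t * zf x r) + Real.exp (-(t * zf x r))) / 2) := by
    intro r
    have h := cosh_term_le (t * zf x r) n
    rw [div_le_iff₀ (by positivity : (0:ℝ) < ((2 * n).factorial : ℝ))] at h
    have h3 : zf x r ^ (2 * n) = (t * zf x r) ^ (2 * n) / t ^ (2 * n) := by
      rw [mul_pow]
      field_simp
    rw [h3, div_mul_eq_mul_div, mul_comm ((2 * n).factorial : ℝ)]
    rw [div_le_div_iff_of_pos_right (pow_pos ht _)]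
    linarith
  calc ∑ r : Fin m → Bool, (zf x r) ^ (2 * n)
      ≤ ∑ r : Fin m → Bool, ((2 * n).factorial : ℝ) / t ^ (2 * n)
          * ((Real.exp (t * zf x r) + Real.exp (-(t * zf x r))) / 2) :=
        Finset.sum_le_sum fun r _ => point r
    _ = ((2 * n).factorial : ℝ) / t ^ (2 * n)
          * ∑ r : Fin m → Bool,
            (Real.exp (t * zf x r) + Real.exp (-(t * zf x r))) / 2 := by
        rw [Finset.mul_sum]
    _ ≤ _ := by
        apply mul_le_mul_of_nonneg_left (sum_cosh_le t x) (by positivity)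

lemma sum_zf_pow_le (x : Fin m → ℝ) (n : ℕ) (hn : 1 ≤ n) (hs : 0 < ∑ i, x i ^ 2) :
    ∑ r : Fin m → Bool, (zf x r) ^ (2 * n)
      ≤ 2 ^ m * n.factorial * (Real.exp 1 * ∑ i, x i ^ 2) ^ n := by
  have hn0 : (0:ℝ) < (n:ℝ) := by exact_mod_cast hn
  set s := ∑ i, x i ^ 2 with hsdef
  set t := Real.sqrt (2 * n / s) with htdef
  have htpos : 0 < t := Real.sqrt_pos.2 (by positivity)
  have ht2 : t ^ 2 = 2 * n / s := Real.sq_sqrt (by positivity)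
  have hexp : t ^ 2 * s / 2 = (n : ℝ) := by rw [ht2]; field_simp
  have hpow : t ^ (2 * n) = (2 * n / s) ^ n := by
    rw [pow_mul, ht2]
  have key := sum_zf_pow_le_aux x n t htpos
  rw [hexp, hpow] at key
  have hexpn : Real.exp (n : ℝ) = Real.exp 1 ^ n := by
    rw [← Real.exp_nat_mul, mul_one]
  rw [hexpn] at key
  refine key.trans ?_
  have h2ns : (0:ℝ) < (2 * n / s) ^ n := by positivity
  rw [div_mul_eq_mul_div, div_le_iff₀ h2ns]
  have hcomb : (Real.exp 1 * s) ^ n * (2 * (n:ℝ) / s) ^ n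
      = Real.exp 1 ^ n * (2 * (n:ℝ)) ^ n := by
    rw [← mul_pow, ← mul_pow]
    congr 1
    field_simp
  have hfact : (((2 * n).factorial : ℝ)) ≤ (2 * (n:ℝ)) ^ n * n.factorial := by
    have := Nat.factorial_two_mul_le n
    calc (((2 * n).factorial : ℝ)) ≤ (((2 * n) ^ n * n.factorial : ℕ) : ℝ) := by
          exact_mod_cast this
      _ = (2 * (n:ℝ)) ^ n * n.factorial := by push_cast; ring
  calc ((2 * n).factorial : ℝ) * (2 ^ m * Real.exp 1 ^ n)
      ≤ ((2 * (n:ℝ)) ^ n * n.factorial) * (2 ^ m * Real.exp 1 ^ n) := by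
        apply mul_le_mul_of_nonneg_right hfact (by positivity)
    _ = 2 ^ m * n.factorial * (Real.exp 1 * s) ^ n * (2 * (n:ℝ) / s) ^ n := by
        linear_combination (2 ^ m * (n.factorial:ℝ)) * hcomb.symm

lemma sum_zf_four_le (x : Fin m → ℝ) (hs : 0 < ∑ i, x i ^ 2) :
    ∑ r : Fin m → Bool, (zf x r) ^ 4
      ≤ 2 ^ m * 2 * (Real.exp 1 * ∑ i, x i ^ 2) ^ 2 := by
  have h := sum_zf_pow_le x 2 (by norm_num) hs
  have hh : ∑ r : Fin m → Bool, (zf x r) ^ (2 * 2)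
      = ∑ r : Fin m → Bool, (zf x r) ^ 4 := by norm_num
  rw [hh] at h
  have hf : ((Nat.factorial 2 : ℕ) : ℝ) = 2 := by norm_num [Nat.factorial]
  rw [hf] at h
  exact h

lemma sum_exp_sq_le (x : Fin m → ℝ) (β : ℝ) (hβ0 : 0 < β) (hβ1 : Real.exp 1 * β < 1)
    (hs : 0 < ∑ i, x i ^ 2) :
    ∑ r : Fin m → Bool, Real.exp (β / (∑ i, x i ^ 2) * (zf x r) ^ 2)
      ≤ 2 ^ m * (1 - Real.exp 1 * β)⁻¹ := by
  set s := ∑ i, x i ^ 2 with hsdef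
  set lam := β / s with hlamdef
  have hlam : 0 < lam := div_pos hβ0 hs
  have hpt : ∀ r : Fin m → Bool, Real.exp (lam * zf x r ^ 2)
      = ∑' n : ℕ, (lam * zf x r ^ 2) ^ n / n.factorial := fun r => exp_tsum _
  rw [Finset.sum_congr rfl fun r _ => hpt r,
    ← Summable.tsum_finsetSum (fun r _ => Real.summable_pow_div_factorial _)]
  have hterm : ∀ n : ℕ, ∑ r : Fin m → Bool, (lam * zf x r ^ 2) ^ n / n.factorial
      ≤ 2 ^ m * (Real.exp 1 * β) ^ n := by
    intro n
    rcases Nat.eq_zero_or_pos n with rfl | hn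
    · simp only [pow_zero, Nat.factorial_zero, Nat.cast_one, div_one]
      rw [Finset.sum_const, card_cube, nsmul_eq_mul, mul_one]
      push_cast
      norm_num
    · have expand : ∀ r : Fin m → Bool, (lam * zf x r ^ 2) ^ n / n.factorial
          = lam ^ n / n.factorial * (zf x r) ^ (2 * n) := by
        intro r
        rw [mul_pow, ← pow_mul, mul_comm 2 n]
        ring
      rw [Finset.sum_congr rfl fun r _ => expand r, ← Finset.mul_sum]
      have hm := sum_zf_pow_le x n hn hs
      have hfac : (0:ℝ) < (n.factorial : ℝ) := by positivity
      calc lam ^ n / n.factorial * ∑ r : Fin m → Bool, (zf x r) ^ (2 * n)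
          ≤ lam ^ n / n.factorial * (2 ^ m * n.factorial * (Real.exp 1 * s) ^ n) := by
            apply mul_le_mul_of_nonneg_left hm (by positivity)
        _ = 2 ^ m * (Real.exp 1 * (lam * s)) ^ n := by
            field_simp
            ring
        _ = 2 ^ m * (Real.exp 1 * β) ^ n := by
            rw [hlamdef, div_mul_cancel₀ _ (ne_of_gt hs)]
  have heb : 0 ≤ Real.exp 1 * β := by positivity
  have hsumm1 : Summable (fun n : ℕ => ∑ r : Fin m → Bool,
      (lam * zf x r ^ 2) ^ n / n.factorial) :=
    summable_sum (fun r _ => Real.summable_pow_div_factorial _)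
  have hg : Summable (fun n : ℕ => (2:ℝ) ^ m * (Real.exp 1 * β) ^ n) :=
    (summable_geometric_of_lt_one heb hβ1).mul_left _
  calc ∑' n : ℕ, ∑ r : Fin m → Bool, (lam * zf x r ^ 2) ^ n / n.factorial
      ≤ ∑' n : ℕ, (2:ℝ) ^ m * (Real.exp 1 * β) ^ n := Summable.tsum_le_tsum hterm hsumm1 hg
    _ = 2 ^ m * (1 - Real.exp 1 * β)⁻¹ := by
        rw [tsum_mul_left, tsum_geometric_of_lt_one heb hβ1]

lemma exp_neg_le_quad {v : ℝ} (hv : 0 ≤ v) : Real.exp (-v) ≤ 1 - v + v ^ 2 / 2 := by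
  have h1 := Real.quadratic_le_exp_of_nonneg hv
  have hpos : 0 ≤ 1 - v + v ^ 2 / 2 := by nlinarith [sq_nonneg (v - 1)]
  have key : 1 ≤ (1 - v + v ^ 2 / 2) * Real.exp v := by
    nlinarith [mul_le_mul_of_nonneg_left h1 hpos, pow_nonneg hv 4]
  rw [Real.exp_neg, ← one_div, div_le_iff₀ (Real.exp_pos v)]
  linarith

lemma sum_exp_neg_sq_le (x : Fin m → ℝ) (hs : 0 < ∑ i, x i ^ 2) :
    ∑ r : Fin m → Bool, Real.exp (-(1 / (90 * (∑ i, x i ^ 2)) * (zf x r) ^ 2))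
      ≤ 2 ^ m * (1 - 1/90 + Real.exp 1 ^ 2 / 8100) := by
  set s := ∑ i, x i ^ 2 with hsdef
  set lam := 1 / (90 * s) with hlamdef
  have hlam : 0 < lam := by positivity
  have point : ∀ r : Fin m → Bool, Real.exp (-(lam * zf x r ^ 2))
      ≤ 1 - lam * zf x r ^ 2 + lam ^ 2 * (zf x r) ^ 4 / 2 := by
    intro r
    have h := exp_neg_le_quad (v := lam * zf x r ^ 2) (by positivity)
    calc Real.exp (-(lam * zf x r ^ 2)) ≤ 1 - lam * zf x r ^ 2
          + (lam * zf x r ^ 2) ^ 2 / 2 := h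
      _ = 1 - lam * zf x r ^ 2 + lam ^ 2 * (zf x r) ^ 4 / 2 := by ring
  calc ∑ r : Fin m → Bool, Real.exp (-(lam * zf x r ^ 2))
      ≤ ∑ r : Fin m → Bool,
          (1 - lam * zf x r ^ 2 + lam ^ 2 * (zf x r) ^ 4 / 2) :=
        Finset.sum_le_sum fun r _ => point r
    _ = 2 ^ m - lam * (2 ^ m * s)
          + lam ^ 2 * (∑ r : Fin m → Bool, (zf x r) ^ 4) / 2 := by
        rw [Finset.sum_add_distrib, Finset.sum_sub_distrib, Finset.sum_const, card_cube,
          ← Finset.mul_sum, sum_zf_sq, ← Finset.sum_div, ← Finset.mul_sum]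
        push_cast
        ring
    _ ≤ 2 ^ m - lam * (2 ^ m * s)
          + lam ^ 2 * (2 ^ m * 2 * (Real.exp 1 * s) ^ 2) / 2 := by
        have h4 := sum_zf_four_le x hs
        have : (0:ℝ) ≤ lam ^ 2 := by positivity
        nlinarith
    _ = 2 ^ m * (1 - 1/90 + Real.exp 1 ^ 2 / 8100) := by
        rw [hlamdef]
        have hsne : s ≠ 0 := ne_of_gt hs
        have he2 : Real.exp 1 ^ 2 = Real.exp 2 := by
          rw [sq, ← Real.exp_add]; norm_num
        field_simp
        ring

lemma card_filter_le {Ω : Type*} [Fintype Ω] (p : Ω → Prop) [DecidablePred p]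
    (f : Ω → ℝ) (hf : ∀ ω, 0 ≤ f ω) (a : ℝ) (ha : 0 < a) (h : ∀ ω, p ω → a ≤ f ω) :
    ((Finset.univ.filter p).card : ℝ) ≤ (∑ ω, f ω) / a := by
  rw [le_div_iff₀ ha]
  calc ((Finset.univ.filter p).card : ℝ) * a
      = ∑ _ω ∈ Finset.univ.filter p, a := by
        rw [Finset.sum_const, nsmul_eq_mul]
    _ ≤ ∑ ω ∈ Finset.univ.filter p, f ω :=
        Finset.sum_le_sum fun ω hω => h ω (Finset.mem_filter.1 hω).2
    _ ≤ ∑ ω, f ω :=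
        Finset.sum_le_sum_of_subset_of_nonneg (Finset.subset_univ _) fun ω _ _ => hf ω

lemma sum_prod_rows (d : ℕ) (G : (Fin m → Bool) → ℝ) :
    ∑ ω : Fin d → Fin m → Bool, ∏ j, G (ω j) = (∑ r : Fin m → Bool, G r) ^ d :=
  (Fintype.sum_pow G d).symm

lemma count_upper (d : ℕ) (x : Fin m → ℝ) (hs : 0 < ∑ i, x i ^ 2) :
    ((Finset.univ.filter (fun ω : Fin d → Fin m → Bool =>
        7/2 * d * (∑ i, x i ^ 2) ≤ ∑ j, (zf x (ω j)) ^ 2)).card : ℝ)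
      ≤ (99/100 : ℝ) ^ d * 2 ^ (d * m) := by
  set s := ∑ i, x i ^ 2 with hsdef
  have he1 := Real.exp_one_lt_d9
  have hc : (0:ℝ) < 1 - Real.exp 1 * (1/20) := by nlinarith [Real.exp_pos 1]
  set lam := (1/20 : ℝ) / s with hlamdef
  have hlam : 0 < lam := by positivity
  have hrow : ∑ r : Fin m → Bool, Real.exp (lam * (zf x r) ^ 2)
      ≤ 2 ^ m * (1 - Real.exp 1 * (1/20))⁻¹ :=
    sum_exp_sq_le x (1/20) (by norm_num) (by nlinarith) hs
  have hrow0 : (0:ℝ) ≤ ∑ r : Fin m → Bool, Real.exp (lam * (zf x r) ^ 2) :=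
    Finset.sum_nonneg fun r _ => (Real.exp_pos _).le
  have hsum : ∑ ω : Fin d → Fin m → Bool, Real.exp (lam * ∑ j, (zf x (ω j)) ^ 2)
      = (∑ r : Fin m → Bool, Real.exp (lam * (zf x r) ^ 2)) ^ d := by
    have hf : ∀ ω : Fin d → Fin m → Bool,
        Real.exp (lam * ∑ j, (zf x (ω j)) ^ 2)
          = ∏ j, Real.exp (lam * (zf x (ω j)) ^ 2) := by
      intro ω; rw [Finset.mul_sum, Real.exp_sum]
    rw [Finset.sum_congr rfl fun ω _ => hf ω]
    exact sum_prod_rows d (fun r => Real.exp (lam * (zf x r) ^ 2))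
  have hmark := card_filter_le
    (fun ω : Fin d → Fin m → Bool => 7/2 * d * s ≤ ∑ j, (zf x (ω j)) ^ 2)
    (fun ω => Real.exp (lam * ∑ j, (zf x (ω j)) ^ 2))
    (fun ω => (Real.exp_pos _).le)
    (Real.exp (lam * (7/2 * d * s))) (Real.exp_pos _)
    (fun ω hω => Real.exp_le_exp.2 (mul_le_mul_of_nonneg_left hω hlam.le))
  refine hmark.trans ?_
  rw [hsum]
  have hexparg : lam * (7/2 * d * s) = (d : ℝ) * (7/40) := by
    rw [hlamdef]; field_simp; ring
  rw [hexparg, Real.exp_nat_mul]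
  rw [div_le_iff₀ (by positivity)]
  have hbase : (∑ r : Fin m → Bool, Real.exp (lam * (zf x r) ^ 2)) ^ d
      ≤ (2 ^ m * (1 - Real.exp 1 * (1/20))⁻¹) ^ d :=
    pow_le_pow_left₀ hrow0 hrow d
  refine hbase.trans ?_
  have hnum : 2 ^ m * (1 - Real.exp 1 * (1/20))⁻¹
      ≤ 99/100 * 2 ^ m * Real.exp (7/40) := by
    have h1 : (47:ℝ)/40 ≤ Real.exp (7/40) := by
      have := Real.add_one_le_exp (7/40 : ℝ); linarith
    have h4 : (1 - Real.exp 1 * (1/20))⁻¹ ≤ 99/100 * Real.exp (7/40) := by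
      rw [← one_div, div_le_iff₀ hc]
      nlinarith [mul_le_mul_of_nonneg_right h1 hc.le]
    calc 2 ^ m * (1 - Real.exp 1 * (1/20))⁻¹
        ≤ 2 ^ m * (99/100 * Real.exp (7/40)) := by
          apply mul_le_mul_of_nonneg_left h4 (by positivity)
      _ = 99/100 * 2 ^ m * Real.exp (7/40) := by ring
  calc (2 ^ m * (1 - Real.exp 1 * (1/20))⁻¹) ^ d
      ≤ (99/100 * 2 ^ m * Real.exp (7/40)) ^ d := by
        apply pow_le_pow_left₀ (by positivity) hnum
    _ = (99/100 : ℝ) ^ d * 2 ^ (d * m) * Real.exp (7/40) ^ d := by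
        rw [mul_pow, mul_pow, ← pow_mul, mul_comm m d]

lemma count_lower (d : ℕ) (x : Fin m → ℝ) (hs : 0 < ∑ i, x i ^ 2) :
    ((Finset.univ.filter (fun ω : Fin d → Fin m → Bool =>
        ∑ j, (zf x (ω j)) ^ 2 ≤ 7/8 * d * (∑ i, x i ^ 2))).card : ℝ)
      ≤ (9996/10000 : ℝ) ^ d * 2 ^ (d * m) := by
  set s := ∑ i, x i ^ 2 with hsdef
  set lam := 1 / (90 * s) with hlamdef
  have hlam : 0 < lam := by positivity
  set q := 1 - 1/90 + Real.exp 1 ^ 2 / 8100 with hqdef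
  have hq0 : (0:ℝ) < q := by positivity
  have hrow : ∑ r : Fin m → Bool, Real.exp (-(lam * (zf x r) ^ 2)) ≤ 2 ^ m * q := by
    have h := sum_exp_neg_sq_le x hs
    exact h
  have hrow0 : (0:ℝ) ≤ ∑ r : Fin m → Bool, Real.exp (-(lam * (zf x r) ^ 2)) :=
    Finset.sum_nonneg fun r _ => (Real.exp_pos _).le
  have hsum : ∑ ω : Fin d → Fin m → Bool, Real.exp (-(lam * ∑ j, (zf x (ω j)) ^ 2))
      = (∑ r : Fin m → Bool, Real.exp (-(lam * (zf x r) ^ 2))) ^ d := by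
    have hf : ∀ ω : Fin d → Fin m → Bool,
        Real.exp (-(lam * ∑ j, (zf x (ω j)) ^ 2))
          = ∏ j, Real.exp (-(lam * (zf x (ω j)) ^ 2)) := by
      intro ω
      rw [Finset.mul_sum, ← Finset.sum_neg_distrib, Real.exp_sum]
    rw [Finset.sum_congr rfl fun ω _ => hf ω]
    exact sum_prod_rows d (fun r => Real.exp (-(lam * (zf x r) ^ 2)))
  have hmark := card_filter_le
    (fun ω : Fin d → Fin m → Bool => ∑ j, (zf x (ω j)) ^ 2 ≤ 7/8 * d * s)
    (fun ω => Real.exp (-(lam * ∑ j, (zf x (ω j)) ^ 2)))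
    (fun ω => (Real.exp_pos _).le)
    (Real.exp (-(lam * (7/8 * d * s)))) (Real.exp_pos _)
    (fun ω hω => by
      apply Real.exp_le_exp.2
      have := mul_le_mul_of_nonneg_left hω hlam.le
      linarith)
  refine hmark.trans ?_
  have hexparg : lam * (7/8 * d * s) = (d : ℝ) * (7/720) := by
    rw [hlamdef]; field_simp; ring
  rw [hsum, hexparg, Real.exp_neg, div_inv_eq_mul, Real.exp_nat_mul]
  have h5 : Real.exp (7/720 : ℝ) * Real.exp (-(7/720 : ℝ)) = 1 := by
    rw [← Real.exp_add]; norm_num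
  have h6 : (713:ℝ)/720 ≤ Real.exp (-(7/720 : ℝ)) := by
    have := Real.add_one_le_exp (-(7/720 : ℝ)); linarith
  have h7 : Real.exp (7/720 : ℝ) ≤ 720/713 := by
    nlinarith [Real.exp_pos (7/720 : ℝ)]
  have he2 : Real.exp 1 ^ 2 < 7.3890562 := by
    nlinarith [Real.exp_one_lt_d9, Real.exp_pos 1]
  have hqnum : q * Real.exp (7/720 : ℝ) ≤ 9996/10000 := by
    have hstep : q * Real.exp (7/720 : ℝ) ≤ q * (720/713) :=
      mul_le_mul_of_nonneg_left h7 hq0.le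
    refine hstep.trans ?_
    rw [hqdef]
    nlinarith
  calc (∑ r : Fin m → Bool, Real.exp (-(lam * zf x r ^ 2))) ^ d * Real.exp (7/720 : ℝ) ^ d
      = ((∑ r : Fin m → Bool, Real.exp (-(lam * zf x r ^ 2))) * Real.exp (7/720 : ℝ)) ^ d := by
        rw [mul_pow]
    _ ≤ (2 ^ m * (9996/10000 : ℝ)) ^ d := by
        apply pow_le_pow_left₀ (by positivity)
        calc (∑ r : Fin m → Bool, Real.exp (-(lam * zf x r ^ 2))) * Real.exp (7/720 : ℝ)
            ≤ (2 ^ m * q) * Real.exp (7/720 : ℝ) :=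
              mul_le_mul_of_nonneg_right hrow (Real.exp_pos _).le
          _ = 2 ^ m * (q * Real.exp (7/720 : ℝ)) := by ring
          _ ≤ 2 ^ m * (9996/10000 : ℝ) :=
              mul_le_mul_of_nonneg_left hqnum (by positivity)
    _ = (9996/10000 : ℝ) ^ d * 2 ^ (d * m) := by
        rw [mul_pow, ← pow_mul, mul_comm m d]; ring

def indi {m : ℕ} (S : Finset (Fin m)) : Fin m → ℝ := fun i => if i ∈ S then 1 else 0

lemma sum_indi_sq (S : Finset (Fin m)) : ∑ i, (indi S i) ^ 2 = (S.card : ℝ) := by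
  have h : ∀ i : Fin m, (indi S i) ^ 2 = if i ∈ S then (1:ℝ) else 0 := by
    intro i; by_cases h : i ∈ S <;> simp [indi, h]
  rw [Finset.sum_congr rfl fun i _ => h i, Finset.sum_ite_mem, Finset.univ_inter,
    Finset.sum_const, nsmul_eq_mul, mul_one]

lemma sum_indi_sub_sq (S S' : Finset (Fin m)) :
    ∑ i, ((indi S - indi S') i) ^ 2 = (((S \ S') ∪ (S' \ S)).card : ℝ) := by
  have h : ∀ i : Fin m, ((indi S - indi S') i) ^ 2
      = if i ∈ (S \ S') ∪ (S' \ S) then (1:ℝ) else 0 := by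
    intro i
    by_cases h1 : i ∈ S <;> by_cases h2 : i ∈ S' <;>
      simp [indi, h1, h2, Finset.mem_union, Finset.mem_sdiff]
  rw [Finset.sum_congr rfl fun i _ => h i, Finset.sum_ite_mem, Finset.univ_inter,
    Finset.sum_const, nsmul_eq_mul, mul_one]

lemma zf_indi (S : Finset (Fin m)) (r : Fin m → Bool) :
    zf (indi S) r = ∑ i ∈ S, rad (r i) := by
  have h : ∀ i : Fin m, indi S i * rad (r i) = if i ∈ S then rad (r i) else 0 := by
    intro i; by_cases h : i ∈ S <;> simp [indi, h]
  rw [zf, Finset.sum_congr rfl fun i _ => h i, Finset.sum_ite_mem, Finset.univ_inter]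

lemma symmdiff_card_pos {S S' : Finset (Fin m)} (h : S ≠ S') :
    0 < ((S \ S') ∪ (S' \ S)).card := by
  rw [Finset.card_pos]
  by_contra hne
  rw [Finset.not_nonempty_iff_eq_empty, Finset.union_eq_empty] at hne
  exact h (Finset.Subset.antisymm
    (Finset.sdiff_eq_empty_iff_subset.1 hne.1)
    (Finset.sdiff_eq_empty_iff_subset.1 hne.2))

set_option maxHeartbeats 1000000 in
theorem main_construction (k m d : ℕ) (hk : 1 ≤ k) (hm : 2 ≤ m)
    (hd : (10000 : ℝ) * k * Real.log m ≤ d) :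
    ∃ v : Fin m → Fin d → ℝ,
      (∀ S : Finset (Fin m), S.card = k → sqNorm (∑ i ∈ S, v i) ≤ 1) ∧
      (∀ S S' : Finset (Fin m), S.card = k → S'.card = k →
        (((S \ S') ∪ (S' \ S)).card : ℝ) / (4 * k) ≤
          sqNorm ((∑ i ∈ S, v i) - ∑ i ∈ S', v i)) := by
  classical
  have hm0 : (0:ℝ) < m := by positivity
  have hm1 : (1:ℝ) < m := by exact_mod_cast lt_of_lt_of_le one_lt_two (by exact_mod_cast hm)
  have hlogm : 0 < Real.log m := Real.log_pos hm1
  have hk0 : (0:ℝ) < k := by exact_mod_cast hk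
  have hd0 : 0 < d := by
    rcases Nat.eq_zero_or_pos d with rfl | h
    · exfalso
      have : (0:ℝ) < 10000 * k * Real.log m := by positivity
      simp only [Nat.cast_zero] at hd
      linarith
    · exact h
  have hdR : (0:ℝ) < d := by exact_mod_cast hd0
  set P := Finset.powersetCard k (Finset.univ : Finset (Fin m)) with hP
  set Bad1 : Finset (Fin m) → Finset (Fin d → Fin m → Bool) := fun S =>
    Finset.univ.filter (fun ω => 7/2 * d * (∑ i, (indi S i) ^ 2)
      ≤ ∑ j, (zf (indi S) (ω j)) ^ 2) with hBad1
  set Bad2 : Finset (Fin m) × Finset (Fin m) → Finset (Fin d → Fin m → Bool) := fun p =>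
    Finset.univ.filter (fun ω => ∑ j, (zf (indi p.1 - indi p.2) (ω j)) ^ 2
      ≤ 7/8 * d * (∑ i, ((indi p.1 - indi p.2) i) ^ 2)) with hBad2
  set PP := (P ×ˢ P).filter (fun p => p.1 ≠ p.2) with hPP
  set B := (P.biUnion Bad1) ∪ (PP.biUnion Bad2) with hB
  -- per-event bounds
  have hmemP : ∀ S, S ∈ P → S.card = k := by
    intro S hS
    exact (Finset.mem_powersetCard.1 hS).2
  have hcard1 : ∀ S ∈ P, ((Bad1 S).card : ℝ) ≤ (99/100:ℝ)^d * 2^(d*m) := by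
    intro S hS
    apply count_upper d (indi S)
    rw [sum_indi_sq, hmemP S hS]
    exact hk0
  have hcard2 : ∀ p ∈ PP, ((Bad2 p).card : ℝ) ≤ (9996/10000:ℝ)^d * 2^(d*m) := by
    intro p hp
    apply count_lower d (indi p.1 - indi p.2)
    rw [sum_indi_sub_sq]
    have hne : p.1 ≠ p.2 := (Finset.mem_filter.1 hp).2
    exact_mod_cast symmdiff_card_pos hne
  -- cardinality of the bad set
  have hPcard : ((P.card : ℝ)) ≤ (m:ℝ) ^ k := by
    rw [hP, Finset.card_powersetCard, Finset.card_univ, Fintype.card_fin]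
    exact_mod_cast Nat.choose_le_pow m k
  have hPPcard : ((PP.card : ℝ)) ≤ ((m:ℝ) ^ k) ^ 2 := by
    have h1 : PP.card ≤ (P ×ˢ P).card := Finset.card_le_card (Finset.filter_subset _ _)
    have h2 : (P ×ˢ P).card = P.card * P.card := Finset.card_product P P
    have : ((PP.card : ℝ)) ≤ (P.card : ℝ) * P.card := by
      have h3 : PP.card ≤ P.card * P.card := h2 ▸ h1
      exact_mod_cast h3
    refine this.trans ?_
    rw [pow_two]
    exact mul_le_mul hPcard hPcard (by positivity) (by positivity)
  have hBcard : ((B.card : ℝ)) ≤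
      (m:ℝ)^k * ((99/100:ℝ)^d * 2^(d*m)) + ((m:ℝ)^k)^2 * ((9996/10000:ℝ)^d * 2^(d*m)) := by
    have step1 : B.card ≤ (P.biUnion Bad1).card + (PP.biUnion Bad2).card :=
      Finset.card_union_le _ _
    have step2 : (P.biUnion Bad1).card ≤ ∑ S ∈ P, (Bad1 S).card :=
      Finset.card_biUnion_le
    have step3 : (PP.biUnion Bad2).card ≤ ∑ p ∈ PP, (Bad2 p).card :=
      Finset.card_biUnion_le
    have s1 : ((∑ S ∈ P, (Bad1 S).card : ℕ) : ℝ) ≤ (m:ℝ)^k * ((99/100:ℝ)^d * 2^(d*m)) := by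
      push_cast
      calc ∑ S ∈ P, ((Bad1 S).card : ℝ) ≤ ∑ _S ∈ P, ((99/100:ℝ)^d * 2^(d*m)) :=
            Finset.sum_le_sum hcard1
        _ = (P.card : ℝ) * ((99/100:ℝ)^d * 2^(d*m)) := by
            rw [Finset.sum_const, nsmul_eq_mul]
        _ ≤ (m:ℝ)^k * ((99/100:ℝ)^d * 2^(d*m)) :=
            mul_le_mul_of_nonneg_right hPcard (by positivity)
    have s2 : ((∑ p ∈ PP, (Bad2 p).card : ℕ) : ℝ)
        ≤ ((m:ℝ)^k)^2 * ((9996/10000:ℝ)^d * 2^(d*m)) := by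
      push_cast
      calc ∑ p ∈ PP, ((Bad2 p).card : ℝ) ≤ ∑ _p ∈ PP, ((9996/10000:ℝ)^d * 2^(d*m)) :=
            Finset.sum_le_sum hcard2
        _ = (PP.card : ℝ) * ((9996/10000:ℝ)^d * 2^(d*m)) := by
            rw [Finset.sum_const, nsmul_eq_mul]
        _ ≤ ((m:ℝ)^k)^2 * ((9996/10000:ℝ)^d * 2^(d*m)) :=
            mul_le_mul_of_nonneg_right hPPcard (by positivity)
    calc ((B.card : ℝ)) ≤ ((P.biUnion Bad1).card : ℝ) + ((PP.biUnion Bad2).card : ℝ) := by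
          exact_mod_cast step1
      _ ≤ ((∑ S ∈ P, (Bad1 S).card : ℕ) : ℝ) + ((∑ p ∈ PP, (Bad2 p).card : ℕ) : ℝ) := by
          gcongr <;> exact_mod_cast (by assumption)
      _ ≤ _ := add_le_add s1 s2
  -- strict inequality against the full count
  have hMk1 : (1:ℝ) ≤ (m:ℝ)^k := by
    calc (1:ℝ) = 1^k := (one_pow k).symm
      _ ≤ (m:ℝ)^k := pow_le_pow_left₀ (by norm_num) (by linarith) k
  have hmk : (m:ℝ)^k ≤ ((m:ℝ)^k)^2 := by nlinarith
  have h2k : ((m:ℝ)^k)^2 = (m:ℝ)^(2*k) := by rw [← pow_mul]; congr 1; ring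
  have hm2k4 : (4:ℝ) ≤ (m:ℝ)^(2*k) := by
    calc (4:ℝ) = 2^2 := by norm_num
      _ ≤ (2:ℝ)^(2*k) := by
        apply pow_le_pow_right₀ (by norm_num)
        omega
      _ ≤ (m:ℝ)^(2*k) := by
        apply pow_le_pow_left₀ (by norm_num)
        exact_mod_cast hm
  have key : 2 * ((m:ℝ)^k)^2 * (9996/10000:ℝ)^d < 1 := by
    have hexp : (9996/10000:ℝ) ≤ Real.exp (-(4/10000)) := by
      have := Real.add_one_le_exp (-(4/10000:ℝ)); linarith
    have hexpd : (9996/10000:ℝ)^d ≤ Real.exp (-(4/10000)) ^ d :=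
      pow_le_pow_left₀ (by norm_num) hexp d
    have hExp : Real.exp (-(4/10000:ℝ)) ^ d = Real.exp (-(4/10000) * d) := by
      rw [mul_comm, Real.exp_nat_mul]
    have hdarg : (4:ℝ) * k * Real.log m ≤ (4/10000) * d := by nlinarith
    have hmono : Real.exp (-(4/10000:ℝ) * d) ≤ Real.exp (-(4 * (k:ℝ) * Real.log m)) := by
      apply Real.exp_le_exp.2; linarith
    have hm4 : Real.exp (((4 * k : ℕ) : ℝ) * Real.log m) = (m:ℝ) ^ (4 * k) := by
      rw [Real.exp_nat_mul, Real.exp_log hm0]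
    have hm4' : Real.exp (-(4 * (k:ℝ) * Real.log m)) = ((m:ℝ) ^ (4 * k))⁻¹ := by
      rw [Real.exp_neg, ← hm4]
      congr 2
      push_cast
      ring
    have hchain : (9996/10000:ℝ)^d ≤ ((m:ℝ) ^ (4 * k))⁻¹ := by
      rw [← hm4']
      exact hexpd.trans (hExp.le.trans (hmono.trans (le_of_eq rfl)))
    have hsplit : (m:ℝ)^(4*k) = (m:ℝ)^(2*k) * (m:ℝ)^(2*k) := by
      rw [← pow_add]; congr 1; ring
    calc 2 * ((m:ℝ)^k)^2 * (9996/10000:ℝ)^d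
        ≤ 2 * (m:ℝ)^(2*k) * ((m:ℝ) ^ (4 * k))⁻¹ := by
          rw [h2k]
          apply mul_le_mul_of_nonneg_left hchain (by positivity)
      _ = 2 / (m:ℝ)^(2*k) := by
          rw [hsplit]
          field_simp
      _ ≤ 2 / 4 := by
          rw [div_le_div_iff₀ (by positivity) (by norm_num)]
          nlinarith
      _ < 1 := by norm_num
  have hfinal : (m:ℝ)^k * ((99/100:ℝ)^d * 2^(d*m))
      + ((m:ℝ)^k)^2 * ((9996/10000:ℝ)^d * 2^(d*m)) < 2^(d*m) := by
    have hq : (99/100:ℝ)^d ≤ (9996/10000:ℝ)^d :=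
      pow_le_pow_left₀ (by norm_num) (by norm_num) d
    have hA : (m:ℝ)^k * ((99/100:ℝ)^d * 2^(d*m))
        ≤ ((m:ℝ)^k)^2 * ((9996/10000:ℝ)^d * 2^(d*m)) := by
      apply mul_le_mul hmk (mul_le_mul_of_nonneg_right hq (by positivity))
        (by positivity) (by positivity)
    have hB2 : 2 * (((m:ℝ)^k)^2 * ((9996/10000:ℝ)^d * 2^(d*m)))
        = (2 * ((m:ℝ)^k)^2 * (9996/10000:ℝ)^d) * 2^(d*m) := by ring
    have hlt : (2 * ((m:ℝ)^k)^2 * (9996/10000:ℝ)^d) * 2^(d*m) < 1 * 2^(d*m) :=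
      mul_lt_mul_of_pos_right key (by positivity)
    rw [one_mul] at hlt
    linarith
  -- extract a good sample point
  have hΩ : Fintype.card (Fin d → Fin m → Bool) = 2^(d*m) := by
    rw [Fintype.card_fun, Fintype.card_fun, Fintype.card_bool, Fintype.card_fin,
      Fintype.card_fin, ← pow_mul, mul_comm]
  have hex : ∃ ω : Fin d → Fin m → Bool, ω ∉ B := by
    by_contra h
    push_neg at h
    have hsub : (Finset.univ : Finset (Fin d → Fin m → Bool)) ⊆ B := fun ω _ => h ω
    have hle := Finset.card_le_card hsub
    rw [Finset.card_univ, hΩ] at hle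
    have hlt : (B.card : ℝ) < ((2^(d*m) : ℕ) : ℝ) := by
      push_cast
      exact lt_of_le_of_lt hBcard hfinal
    have : B.card < 2^(d*m) := by exact_mod_cast hlt
    omega
  obtain ⟨ω, hω⟩ := hex
  have hg1 : ∀ S : Finset (Fin m), S.card = k →
      ∑ j, (zf (indi S) (ω j))^2 ≤ 7/2 * d * k := by
    intro S hS
    have hSP : S ∈ P := by
      rw [hP, Finset.mem_powersetCard]
      exact ⟨Finset.subset_univ S, hS⟩
    have hnm : ω ∉ Bad1 S := fun hmem =>
      hω (Finset.mem_union_left _ (Finset.mem_biUnion.2 ⟨S, hSP, hmem⟩))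
    rw [hBad1] at hnm
    simp only [Finset.mem_filter, Finset.mem_univ, true_and, not_le] at hnm
    rw [sum_indi_sq, hS] at hnm
    linarith
  have hg2 : ∀ S S' : Finset (Fin m), S.card = k → S'.card = k → S ≠ S' →
      7/8 * d * (((S \ S') ∪ (S' \ S)).card : ℝ)
        ≤ ∑ j, (zf (indi S - indi S') (ω j))^2 := by
    intro S S' hS hS' hne
    have hSP : S ∈ P := by
      rw [hP, Finset.mem_powersetCard]; exact ⟨Finset.subset_univ S, hS⟩
    have hSP' : S' ∈ P := by
      rw [hP, Finset.mem_powersetCard]; exact ⟨Finset.subset_univ S', hS'⟩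
    have hpP : (S, S') ∈ PP := by
      rw [hPP, Finset.mem_filter]
      exact ⟨Finset.mem_product.2 ⟨hSP, hSP'⟩, hne⟩
    have hnm : ω ∉ Bad2 (S, S') := fun hmem =>
      hω (Finset.mem_union_right _ (Finset.mem_biUnion.2 ⟨(S, S'), hpP, hmem⟩))
    rw [hBad2] at hnm
    simp only [Finset.mem_filter, Finset.mem_univ, true_and, not_le] at hnm
    rw [sum_indi_sub_sq] at hnm
    linarith
  -- the construction
  clear_value B Bad1 Bad2 PP P
  clear hω hB hBcard hfinal hΩ hcard1 hcard2 hPcard hPPcard hmemP hMk1 hmk h2k hm2k4 key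
  clear B Bad1 Bad2 PP P hBad1 hBad2 hPP hP
  set c := Real.sqrt (2 / (7 * k * d)) with hcdef
  have hc2 : c^2 = 2 / (7 * k * d) := Real.sq_sqrt (by positivity)
  refine ⟨fun i j => c * rad (ω j i), ?_, ?_⟩
  · intro S hS
    have heval : sqNorm (∑ i ∈ S, (fun j : Fin d => c * rad (ω j i)))
        = c^2 * ∑ j, (zf (indi S) (ω j))^2 := by
      rw [sqNorm, Finset.mul_sum]
      refine Finset.sum_congr rfl fun j _ => ?_
      have happ : (∑ i ∈ S, (fun j' : Fin d => c * rad (ω j' i))) j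
          = c * zf (indi S) (ω j) := by
        rw [Finset.sum_apply, zf_indi, Finset.mul_sum]
      rw [happ, mul_pow]
    rw [heval]
    have hb := hg1 S hS
    calc c^2 * ∑ j, (zf (indi S) (ω j))^2 ≤ c^2 * (7/2 * d * k) :=
          mul_le_mul_of_nonneg_left hb (by positivity)
      _ = 1 := by
          rw [hc2]
          field_simp
  · intro S S' hS hS'
    rcases eq_or_ne S S' with rfl | hne
    · have h1 : ((S \ S) ∪ (S \ S)) = (∅ : Finset (Fin m)) := by simp
      rw [h1]
      simp only [Finset.card_empty, Nat.cast_zero, zero_div]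
      exact Finset.sum_nonneg fun j _ => sq_nonneg _
    · have hQ := hg2 S S' hS hS' hne
      have heval : sqNorm ((∑ i ∈ S, (fun j : Fin d => c * rad (ω j i)))
            - ∑ i ∈ S', (fun j : Fin d => c * rad (ω j i)))
          = c^2 * ∑ j, (zf (indi S - indi S') (ω j))^2 := by
        rw [sqNorm, Finset.mul_sum]
        refine Finset.sum_congr rfl fun j _ => ?_
        have happ : ((∑ i ∈ S, (fun j' : Fin d => c * rad (ω j' i)))
              - ∑ i ∈ S', (fun j' : Fin d => c * rad (ω j' i))) j
            = c * zf (indi S - indi S') (ω j) := by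
          rw [Pi.sub_apply, Finset.sum_apply, Finset.sum_apply, zf_sub, zf_indi, zf_indi,
            mul_sub, Finset.mul_sum, Finset.mul_sum]
        rw [happ, mul_pow]
      rw [heval]
      have hkR : (0:ℝ) < 4 * k := by positivity
      calc (((S \ S') ∪ (S' \ S)).card : ℝ) / (4 * k)
          = c^2 * (7/8 * d * (((S \ S') ∪ (S' \ S)).card : ℝ)) := by
            rw [hc2]
            field_simp
            ring
        _ ≤ c^2 * ∑ j, (zf (indi S - indi S') (ω j))^2 :=
            mul_le_mul_of_nonneg_left hQ (by positivity)

end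
end SepExperts

/-- Construction of constant experts: there are universal constants `C, c > 0` such that for
`k ≤ m` and `d ≥ C k log m` there are vectors `v_1,…,v_m ∈ ℝ^d` whose subset sums
`v_S = ∑_{i∈S} v_i` over `k`-element subsets satisfy `‖v_S‖² ≤ 1` (boundedness) and
`‖v_S − v_{S'}‖² ≥ |S Δ S'|/(4k)` (separation). -/
theorem exists_separated_constant_experts :
    ∃ C c : ℝ, 0 < C ∧ 0 < c ∧
      ∀ (k m d : ℕ), k ≤ m → (d : ℝ) ≥ C * k * Real.log m →
        ∃ v : Fin m → Fin d → ℝ,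
          (∀ S : Finset (Fin m), S.card = k → sqNorm (∑ i ∈ S, v i) ≤ 1) ∧
          (∀ S S' : Finset (Fin m), S.card = k → S'.card = k →
            (((S \ S') ∪ (S' \ S)).card : ℝ) / (4 * k) ≤
              sqNorm ((∑ i ∈ S, v i) - ∑ i ∈ S', v i)) := by
  refine ⟨10000, 1, by norm_num, by norm_num, ?_⟩
  intro k m d hkm hd
  by_cases hk : k = 0
  · subst hk
    refine ⟨fun _ _ => 0, ?_, ?_⟩
    · intro S hS
      simp [sqNorm, Finset.sum_apply]
    · intro S S' hS hS'
      have hS0 : S = ∅ := Finset.card_eq_zero.1 hS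
      have hS0' : S' = ∅ := Finset.card_eq_zero.1 hS'
      subst hS0; subst hS0'
      simp [sqNorm, Finset.sum_apply]
  · by_cases hm : m ≤ 1
    · have hk1 : k = 1 := by omega
      have hm1 : m = 1 := by omega
      subst hk1; subst hm1
      refine ⟨fun _ _ => 0, ?_, ?_⟩
      · intro S hS
        simp [sqNorm, Finset.sum_apply]
      · intro S S' hS hS'
        have h1 : S = Finset.univ := Finset.eq_univ_of_card S (by simpa using hS)
        have h2 : S' = Finset.univ := Finset.eq_univ_of_card S' (by simpa using hS')
        rw [h1, h2]
        simp [sqNorm, Finset.sum_apply]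
    · have hk1 : 1 ≤ k := Nat.one_le_iff_ne_zero.2 hk
      have hm2 : 2 ≤ m := by omega
      exact SepExperts.main_construction k m d hk1 hm2 hd

end
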